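/- Let k ⊆ K be number fields with [K:k] = e. Then for any α, β ∈ K with k(α, β) = K, there exist a primitive element ξ = m₁α + m₂β with rational integers 0 ≤ m₁, m₂ < e satisfying k(ξ) = K and H(1, ξ) ≤ 2e · H(1, α, β). Consequently δ(K/k) ≤ 2e · δ_g(K/k) for every g ∈ G(K/k), where δ(K/k) = inf{H(1,α) : K = k(α)} and δ_g(K/k) = inf{H(1,α,β) : k(α,β) = K, [k(α):k] = g}. -/

import Mathlib

open scoped Classical

open NumberField

/-- The absolute non-logarithmic Weil height of a tuple `(x₀,…,x_{m-1})` of elements of a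
number field `K`: the product over all places of the maximum of the absolute values, with
the standard normalizations (the contribution of the finite places being the inverse of
the absolute norm of the fractional ideal generated by the coordinates), raised to `1/d`
where `d = [K:ℚ]`. -/
noncomputable def heightTuple (K : Type*) [Field K] [NumberField K] {m : ℕ}
    (x : Fin m → K) : ℝ :=
  ((∏ v : InfinitePlace K, (⨆ i, v (x i)) ^ v.mult) /
      ((FractionalIdeal.absNorm (FractionalIdeal.spanFinset (𝓞 K) Finset.univ x) : ℚ) : ℝ)) ^
    ((Module.finrank ℚ K : ℝ)⁻¹)

/-- `δ(K/k)`: the infimum of `H(1,α)` over generators `α` of `K/k`. -/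
noncomputable def deltaKk (k K : Type*) [Field k] [Field K] [Algebra k K]
    [NumberField K] : ℝ :=
  sInf {h : ℝ | ∃ α : K, IntermediateField.adjoin k {α} = ⊤ ∧ h = heightTuple K ![1, α]}

/-- `δ_g(K/k)`: the infimum of `H(1,α,β)` over pairs `α, β` with `k(α,β) = K` and
`[k(α):k] = g`. -/
noncomputable def deltaG (k K : Type*) [Field k] [Field K] [Algebra k K]
    [NumberField K] (g : ℕ) : ℝ :=
  sInf {h : ℝ | ∃ α β : K, IntermediateField.adjoin k {α, β} = ⊤ ∧
    Module.finrank k (IntermediateField.adjoin k {α}) = g ∧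
    h = heightTuple K ![1, α, β]}

/-- `G(K/k)`: the set of degrees `[K₀:k]` of proper intermediate fields `k ⊆ K₀ ⊊ K`,
taken to be `{1}` when `K = k`. -/
noncomputable def GSet (k K : Type*) [Field k] [Field K] [Algebra k K] : Set ℕ :=
  if Module.finrank k K = 1 then {1}
  else {g : ℕ | ∃ K₀ : IntermediateField k K, K₀ ≠ ⊤ ∧ Module.finrank k K₀ = g}


section Aux

open NumberField IntermediateField
open scoped nonZeroDivisors Classical

set_option linter.unusedSectionVars false

variable {K : Type*} [Field K] [NumberField K]

lemma place_natCast_le (v : InfinitePlace K) (m : ℕ) : v ((m : K)) ≤ (m : ℝ) := by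
  induction m with
  | zero => simp
  | succ n ih =>
      push_cast
      calc v ((n : K) + 1) ≤ v (n : K) + v 1 := v.1.add_le _ _
      _ ≤ (n : ℝ) + 1 := by rw [map_one]; linarith

lemma heightTuple_nonneg {m : ℕ} (x : Fin m → K) : 0 ≤ heightTuple K x := by
  apply Real.rpow_nonneg
  apply div_nonneg
  · exact Finset.prod_nonneg fun v _ => pow_nonneg (Real.iSup_nonneg fun i => apply_nonneg v _) _
  · exact_mod_cast FractionalIdeal.absNorm_nonneg _

lemma absNorm_anti {I J : FractionalIdeal (𝓞 K)⁰ K}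
    (hI : I ≠ 0) (hij : I ≤ J) : FractionalIdeal.absNorm J ≤ FractionalIdeal.absNorm I := by
  have hJ : J ≠ 0 := fun h => hI (le_antisymm (h ▸ hij) (FractionalIdeal.zero_le _))
  have h1 : J⁻¹ * I ≤ 1 := by
    calc J⁻¹ * I ≤ J⁻¹ * J := mul_le_mul_right hij _
    _ = 1 := inv_mul_cancel₀ hJ
  obtain ⟨I₀, hI₀⟩ := FractionalIdeal.le_one_iff_exists_coeIdeal.mp h1
  have hne : (J⁻¹ * I) ≠ 0 := mul_ne_zero (inv_ne_zero hJ) hI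
  have hq : FractionalIdeal.absNorm (J⁻¹ * I) = (Ideal.absNorm I₀ : ℚ) := by
    rw [← hI₀, FractionalIdeal.coeIdeal_absNorm]
  have h2 : (1:ℚ) ≤ FractionalIdeal.absNorm (J⁻¹ * I) := by
    rw [hq]
    have : Ideal.absNorm I₀ ≠ 0 := by
      intro h
      apply hne
      rw [← hI₀, Ideal.absNorm_eq_zero_iff.mp h]
      simp
    exact_mod_cast Nat.one_le_iff_ne_zero.mpr this
  have h3 : FractionalIdeal.absNorm (J⁻¹ * I)
      = (FractionalIdeal.absNorm J)⁻¹ * FractionalIdeal.absNorm I := by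
    rw [map_mul, map_inv₀]
  have hJpos : 0 < FractionalIdeal.absNorm J := by
    rcases lt_or_eq_of_le (FractionalIdeal.absNorm_nonneg J) with h | h
    · exact h
    · exact absurd (FractionalIdeal.absNorm_eq_zero_iff.mp h.symm) hJ
  rw [h3] at h2
  have := mul_le_mul_of_nonneg_left h2 hJpos.le
  rwa [mul_one, ← mul_assoc, mul_inv_cancel₀ hJpos.ne', one_mul] at this

lemma heightTuple_combination_le (α β : K) (m₁ m₂ e : ℕ) (h1 : m₁ ≤ e) (h2 : m₂ ≤ e)
    (he : 1 ≤ e) :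
    heightTuple K ![1, (m₁ : K) * α + (m₂ : K) * β] ≤ 2 * e * heightTuple K ![1, α, β] := by
  set ξ : K := (m₁ : K) * α + (m₂ : K) * β with hξ
  set d := Module.finrank ℚ K with hd
  have hd0 : 0 < d := Module.finrank_pos
  have he' : (1:ℝ) ≤ 2 * e := by
    have : (1:ℝ) ≤ (e:ℝ) := by exact_mod_cast he
    linarith
  set S3 : InfinitePlace K → ℝ := fun v => ⨆ i, v (![1, α, β] i) with hS3
  have hbdd3 : ∀ v : InfinitePlace K, BddAbove (Set.range fun i => v (![1, α, β] i)) :=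
    fun v => Set.Finite.bddAbove (Set.finite_range _)
  have hS3one : ∀ v : InfinitePlace K, 1 ≤ S3 v := by
    intro v
    have := le_ciSup (hbdd3 v) 0
    simpa using this
  have hS3α : ∀ v : InfinitePlace K, v α ≤ S3 v := by
    intro v
    have := le_ciSup (hbdd3 v) 1
    simpa using this
  have hS3β : ∀ v : InfinitePlace K, v β ≤ S3 v := by
    intro v
    have := le_ciSup (hbdd3 v) 2
    simpa using this
  have hS3nonneg : ∀ v : InfinitePlace K, 0 ≤ S3 v := fun v => le_trans zero_le_one (hS3one v)
  have hsup : ∀ v : InfinitePlace K, (⨆ i, v (![1, ξ] i)) ≤ (2 * e : ℝ) * S3 v := by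
    intro v
    refine ciSup_le fun i => ?_
    fin_cases i
    · simp only [Fin.zero_eta, Fin.isValue, Matrix.cons_val_zero, map_one]
      calc (1:ℝ) = 1 * 1 := (one_mul 1).symm
      _ ≤ (2 * e : ℝ) * S3 v := mul_le_mul he' (hS3one v) zero_le_one (by linarith)
    · simp only [Fin.mk_one, Fin.isValue, Matrix.cons_val_one, Matrix.head_cons]
      have step1 : v ξ ≤ v ((m₁ : K) * α) + v ((m₂ : K) * β) := v.1.add_le _ _
      have step2 : v ((m₁ : K) * α) ≤ (e : ℝ) * S3 v := by
        rw [map_mul]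
        refine mul_le_mul (le_trans (place_natCast_le v m₁) ?_) (hS3α v)
          (apply_nonneg v α) (by positivity)
        exact_mod_cast h1
      have step3 : v ((m₂ : K) * β) ≤ (e : ℝ) * S3 v := by
        rw [map_mul]
        refine mul_le_mul (le_trans (place_natCast_le v m₂) ?_) (hS3β v)
          (apply_nonneg v β) (by positivity)
        exact_mod_cast h2
      calc v ξ ≤ (e:ℝ) * S3 v + (e:ℝ) * S3 v := le_trans step1 (add_le_add step2 step3)
      _ = (2 * e : ℝ) * S3 v := by ring
  -- numerator inequality
  have hnum : (∏ v : InfinitePlace K, (⨆ i, v (![1, ξ] i)) ^ v.mult)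
      ≤ (2 * e : ℝ) ^ d * ∏ v : InfinitePlace K, S3 v ^ v.mult := by
    have step : (∏ v : InfinitePlace K, (⨆ i, v (![1, ξ] i)) ^ v.mult)
        ≤ ∏ v : InfinitePlace K, ((2 * e : ℝ) * S3 v) ^ v.mult := by
      refine Finset.prod_le_prod (fun v _ => pow_nonneg ?_ _)
        (fun v _ => pow_le_pow_left₀ ?_ (hsup v) _)
      · exact Real.iSup_nonneg fun i => apply_nonneg v _
      · exact Real.iSup_nonneg fun i => apply_nonneg v _
    refine le_trans step (le_of_eq ?_)
    have expand : (∏ v : InfinitePlace K, ((2 * e : ℝ) * S3 v) ^ v.mult)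
        = (∏ v : InfinitePlace K, (2 * e : ℝ) ^ v.mult)
          * ∏ v : InfinitePlace K, S3 v ^ v.mult := by
      rw [← Finset.prod_mul_distrib]
      exact Finset.prod_congr rfl fun v _ => mul_pow _ _ _
    rw [expand, Finset.prod_pow_eq_pow_sum, InfinitePlace.sum_mult_eq]
  -- denominators
  set I2 := FractionalIdeal.spanFinset (𝓞 K) Finset.univ ![1, ξ] with hI2
  set I3 := FractionalIdeal.spanFinset (𝓞 K) Finset.univ ![1, α, β] with hI3
  have hI2ne : I2 ≠ 0 := FractionalIdeal.spanFinset_ne_zero.mpr ⟨0, Finset.mem_univ _, by simp⟩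
  have hI3ne : I3 ≠ 0 := FractionalIdeal.spanFinset_ne_zero.mpr ⟨0, Finset.mem_univ _, by simp⟩
  have hle : I2 ≤ I3 := by
    rw [hI2, hI3, ← FractionalIdeal.coe_le_coe, FractionalIdeal.spanFinset_coe,
      FractionalIdeal.spanFinset_coe, Submodule.span_le]
    rintro x ⟨i, -, rfl⟩
    have hα : α ∈ Submodule.span (𝓞 K) (![1, α, β] '' ↑(Finset.univ : Finset (Fin 3))) :=
      Submodule.subset_span ⟨1, by simp, by simp⟩
    have hβ : β ∈ Submodule.span (𝓞 K) (![1, α, β] '' ↑(Finset.univ : Finset (Fin 3))) :=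
      Submodule.subset_span ⟨2, by simp, by simp⟩
    fin_cases i
    · exact Submodule.subset_span ⟨0, by simp, by simp⟩
    · show ξ ∈ _
      rw [hξ]
      have e1 : (m₁ : K) * α = (m₁ : 𝓞 K) • α := by
        rw [Algebra.smul_def, map_natCast]
      have e2 : (m₂ : K) * β = (m₂ : 𝓞 K) • β := by
        rw [Algebra.smul_def, map_natCast]
      exact Submodule.add_mem _ (e1 ▸ Submodule.smul_mem _ _ hα)
        (e2 ▸ Submodule.smul_mem _ _ hβ)
  have hN : ((FractionalIdeal.absNorm I3 : ℚ) : ℝ) ≤ ((FractionalIdeal.absNorm I2 : ℚ) : ℝ) := by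
    exact_mod_cast absNorm_anti hI2ne hle
  have hN3pos : (0:ℝ) < ((FractionalIdeal.absNorm I3 : ℚ) : ℝ) := by
    have h0 : FractionalIdeal.absNorm I3 ≠ 0 :=
      fun h => hI3ne (FractionalIdeal.absNorm_eq_zero_iff.mp h)
    exact_mod_cast lt_of_le_of_ne (FractionalIdeal.absNorm_nonneg I3) (Ne.symm h0)
  have prod2nonneg : (0:ℝ) ≤ ∏ v : InfinitePlace K, (⨆ i, v (![1, ξ] i)) ^ v.mult :=
    Finset.prod_nonneg fun v _ => pow_nonneg (Real.iSup_nonneg fun i => apply_nonneg v _) _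
  have prod3nonneg : (0:ℝ) ≤ ∏ v : InfinitePlace K, S3 v ^ v.mult :=
    Finset.prod_nonneg fun v _ => pow_nonneg (hS3nonneg v) _
  have key : (∏ v : InfinitePlace K, (⨆ i, v (![1, ξ] i)) ^ v.mult)
        / ((FractionalIdeal.absNorm I2 : ℚ) : ℝ)
      ≤ (2 * e : ℝ) ^ d * ((∏ v : InfinitePlace K, S3 v ^ v.mult)
        / ((FractionalIdeal.absNorm I3 : ℚ) : ℝ)) := by
    rw [← mul_div_assoc]
    exact div_le_div₀ (by positivity) hnum hN3pos hN
  have base2nonneg : (0:ℝ) ≤ (∏ v : InfinitePlace K, (⨆ i, v (![1, ξ] i)) ^ v.mult)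
      / ((FractionalIdeal.absNorm I2 : ℚ) : ℝ) := by
    apply div_nonneg prod2nonneg
    exact_mod_cast FractionalIdeal.absNorm_nonneg I2
  have hdne : ((d:ℕ):ℝ) ≠ 0 := Nat.cast_ne_zero.mpr hd0.ne'
  have final : ((∏ v : InfinitePlace K, (⨆ i, v (![1, ξ] i)) ^ v.mult)
        / ((FractionalIdeal.absNorm I2 : ℚ) : ℝ)) ^ ((d:ℝ)⁻¹)
      ≤ 2 * e * (((∏ v : InfinitePlace K, S3 v ^ v.mult)
        / ((FractionalIdeal.absNorm I3 : ℚ) : ℝ)) ^ ((d:ℝ)⁻¹)) := by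
    calc ((∏ v : InfinitePlace K, (⨆ i, v (![1, ξ] i)) ^ v.mult)
        / ((FractionalIdeal.absNorm I2 : ℚ) : ℝ)) ^ ((d:ℝ)⁻¹)
        ≤ ((2 * e : ℝ) ^ d * ((∏ v : InfinitePlace K, S3 v ^ v.mult)
          / ((FractionalIdeal.absNorm I3 : ℚ) : ℝ))) ^ ((d:ℝ)⁻¹) :=
        Real.rpow_le_rpow base2nonneg key (by positivity)
      _ = 2 * e * (((∏ v : InfinitePlace K, S3 v ^ v.mult)
          / ((FractionalIdeal.absNorm I3 : ℚ) : ℝ)) ^ ((d:ℝ)⁻¹)) := by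
        rw [Real.mul_rpow (by positivity) (div_nonneg prod3nonneg hN3pos.le),
          ← Real.rpow_natCast (2 * (e:ℝ)) d, ← Real.rpow_mul (by positivity),
          mul_inv_cancel₀ hdne, Real.rpow_one]
  exact final

variable (k : Type*) [Field k] [Algebra k K] [NumberField k] [FiniteDimensional k K]

-- step 1: a non-generator is fixed by some embedding ≠ ι
lemma exists_embedding_fix (ξ : K) (hne : IntermediateField.adjoin k {ξ} ≠ ⊤) :
    ∃ σ : K →ₐ[k] AlgebraicClosure K,
      σ ≠ IsScalarTower.toAlgHom k K (AlgebraicClosure K) ∧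
      σ ξ = algebraMap K (AlgebraicClosure K) ξ := by
  set Ω := AlgebraicClosure K
  set F := IntermediateField.adjoin k {ξ} with hF
  haveI : FiniteDimensional F K := FiniteDimensional.right k F K
  haveI : CharZero F := charZero_of_injective_algebraMap (algebraMap ℚ F).injective
  have h2 : 2 ≤ Module.finrank F K := by
    by_contra h
    push_neg at h
    interval_cases hfr : Module.finrank F K
    · exact absurd hfr Module.finrank_pos.ne'
    · apply hne
      apply IntermediateField.toSubalgebra_injective
      rw [IntermediateField.top_toSubalgebra]
      rw [← Subalgebra.bot_eq_top_iff_finrank_eq_one] at hfr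
      apply Subalgebra.toSubmodule.injective
      apply Submodule.eq_top_iff'.mpr
      intro x
      have hx : x ∈ (⊤ : Subalgebra F K) := trivial
      rw [← hfr, Algebra.mem_bot] at hx
      obtain ⟨y, rfl⟩ := hx
      exact SetLike.coe_mem y
  have hcard : 2 ≤ Fintype.card (K →ₐ[F] Ω) := by
    rw [AlgHom.card F K Ω]; exact h2
  obtain ⟨σ'₁, σ'₂, hσ'⟩ := Fintype.exists_pair_of_one_lt_card (α := K →ₐ[F] Ω) (by omega)
  have hval : ∀ σ' : K →ₐ[F] Ω, σ' ξ = algebraMap K Ω ξ := by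
    intro σ'
    have hmem : ξ ∈ F := IntermediateField.mem_adjoin_simple_self k ξ
    have h1 : σ' (algebraMap F K ⟨ξ, hmem⟩) = algebraMap F Ω ⟨ξ, hmem⟩ := σ'.commutes _
    have h2 : algebraMap F K ⟨ξ, hmem⟩ = ξ := rfl
    have h3 : algebraMap F Ω ⟨ξ, hmem⟩ = algebraMap K Ω (algebraMap F K ⟨ξ, hmem⟩) :=
      (IsScalarTower.algebraMap_apply F K Ω _)
    rw [h2] at h1 h3
    rw [h1, h3]
  have hdistinct : (σ'₁.restrictScalars k) ≠ (σ'₂.restrictScalars k) := by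
    intro h
    exact hσ' (AlgHom.ext fun x => congrArg (fun f => f x) (congrArg DFunLike.coe h))
  rcases eq_or_ne (σ'₁.restrictScalars k) (IsScalarTower.toAlgHom k K Ω) with h | h
  · exact ⟨σ'₂.restrictScalars k, by rw [← h]; exact hdistinct.symm, hval σ'₂⟩
  · exact ⟨σ'₁.restrictScalars k, h, hval σ'₁⟩

lemma exists_good_pair (e : ℕ) (he : Module.finrank k K = e) (α β : K)
    (hab : IntermediateField.adjoin k {α, β} = ⊤) :
    ∃ m₁ m₂ : ℕ, m₁ < e ∧ m₂ < e ∧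
      IntermediateField.adjoin k {((m₁ : K) * α + (m₂ : K) * β)} = ⊤ := by
  have he1 : 1 ≤ e := he ▸ Module.finrank_pos
  by_cases he2 : e = 1
  · subst he2
    refine ⟨0, 0, one_pos, one_pos, ?_⟩
    have hz : ((0 : ℕ) : K) * α + ((0 : ℕ) : K) * β = 0 := by norm_num
    rw [hz]
    have h1 : Module.finrank k (⊤ : IntermediateField k K) = 1 := by
      rw [IntermediateField.finrank_top']; exact he
    have h2 : (⊤ : IntermediateField k K) = ⊥ := IntermediateField.finrank_eq_one_iff.mp h1
    exact eq_top_iff.mpr (h2 ▸ bot_le)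
  · have he2' : 2 ≤ e := by omega
    set Ω := AlgebraicClosure K with hΩ
    haveI : CharZero Ω :=
      charZero_of_injective_algebraMap (algebraMap K Ω).injective
    set ι : K →ₐ[k] Ω := IsScalarTower.toAlgHom k K Ω with hι
    have hcard : Fintype.card (K →ₐ[k] Ω) = e := by rw [AlgHom.card k K Ω]; exact he
    set L : (K →ₐ[k] Ω) → Finset (Fin e × Fin e) := fun σ =>
      Finset.univ.filter (fun p => ((p.1 : ℕ) : Ω) * (σ α - ι α)
        + ((p.2 : ℕ) : Ω) * (σ β - ι β) = 0) with hL
    have hLcard : ∀ σ : K →ₐ[k] Ω, σ ≠ ι → (L σ).card ≤ e := by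
      intro σ hσ
      have hab0 : ¬(σ α - ι α = 0 ∧ σ β - ι β = 0) := by
        rintro ⟨ha, hb⟩
        apply hσ
        have hEq : Algebra.adjoin k ({α, β} : Set K) = ⊤ := by
          have h := congrArg IntermediateField.toSubalgebra hab
          rwa [IntermediateField.adjoin_toSubalgebra_of_isAlgebraic
            (fun x _ => Algebra.IsAlgebraic.isAlgebraic x),
            IntermediateField.top_toSubalgebra] at h
        have hle : (⊤ : Subalgebra k K) ≤ AlgHom.equalizer σ ι := by
          rw [← hEq]
          apply Algebra.adjoin_le
          rintro y hy
          rcases hy with rfl | hy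
          · exact sub_eq_zero.mp ha
          · rcases hy with rfl
            exact sub_eq_zero.mp hb
        exact AlgHom.ext fun x => hle trivial
      by_cases hb : σ β - ι β = 0
      · have ha : σ α - ι α ≠ 0 := fun h => hab0 ⟨h, hb⟩
        have : ((L σ).card ≤ (Finset.univ : Finset (Fin e)).card) := by
          apply Finset.card_le_card_of_injOn Prod.snd (fun p _ => Finset.mem_univ _)
          intro p hp q hq hpq
          simp only [hL, Finset.mem_coe, Finset.mem_filter, Finset.mem_univ, true_and] at hp hq
          rw [hb, mul_zero, add_zero, mul_eq_zero] at hp hq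
          have hp1 : (p.1 : ℕ) = 0 := by
            rcases hp with h | h
            · exact_mod_cast h
            · exact absurd h ha
          have hq1 : (q.1 : ℕ) = 0 := by
            rcases hq with h | h
            · exact_mod_cast h
            · exact absurd h ha
          exact Prod.ext (Fin.ext (hp1.trans hq1.symm)) hpq
        simpa using this
      · have : ((L σ).card ≤ (Finset.univ : Finset (Fin e)).card) := by
          apply Finset.card_le_card_of_injOn Prod.fst (fun p _ => Finset.mem_univ _)
          intro p hp q hq hpq
          simp only [hL, Finset.mem_coe, Finset.mem_filter, Finset.mem_univ, true_and] at hp hq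
          have hpq' : ((p.1 : ℕ) : Ω) = ((q.1 : ℕ) : Ω) := by rw [hpq]
          have hmul : ((p.2 : ℕ) : Ω) * (σ β - ι β) = ((q.2 : ℕ) : Ω) * (σ β - ι β) := by
            linear_combination hp - hq - (σ α - ι α) * hpq'
          have h2 : ((p.2 : ℕ) : Ω) = ((q.2 : ℕ) : Ω) := mul_right_cancel₀ hb hmul
          have : (p.2 : ℕ) = (q.2 : ℕ) := by exact_mod_cast h2
          exact Prod.ext hpq (Fin.ext this)
        simpa using this
    set bad : Finset (Fin e × Fin e) := Finset.univ.filter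
      (fun p : Fin e × Fin e =>
        IntermediateField.adjoin k {((p.1 : ℕ) : K) * α + ((p.2 : ℕ) : K) * β} ≠ ⊤) with hbad
    have hsub : bad ⊆ (Finset.univ.filter (fun σ : K →ₐ[k] Ω => σ ≠ ι)).biUnion L := by
      intro p hp
      simp only [hbad, Finset.mem_filter, Finset.mem_univ, true_and] at hp
      obtain ⟨σ, hσι, hσξ⟩ := exists_embedding_fix k _ hp
      refine Finset.mem_biUnion.mpr ⟨σ, by simp only [Finset.mem_filter, Finset.mem_univ, true_and]; exact hσι, ?_⟩
      simp only [hL, Finset.mem_filter, Finset.mem_univ, true_and]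
      have hσξ' : ((p.1 : ℕ) : Ω) * σ α + ((p.2 : ℕ) : Ω) * σ β
          = ((p.1 : ℕ) : Ω) * ι α + ((p.2 : ℕ) : Ω) * ι β := by
        have h1 : σ (((p.1 : ℕ) : K) * α + ((p.2 : ℕ) : K) * β)
            = ((p.1 : ℕ) : Ω) * σ α + ((p.2 : ℕ) : Ω) * σ β := by
          rw [map_add, map_mul, map_mul, map_natCast, map_natCast]
        have h2 : ι (((p.1 : ℕ) : K) * α + ((p.2 : ℕ) : K) * β)
            = ((p.1 : ℕ) : Ω) * ι α + ((p.2 : ℕ) : Ω) * ι β := by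
          rw [map_add, map_mul, map_mul, map_natCast, map_natCast]
        rw [← h1, ← h2]
        exact hσξ
      linear_combination hσξ'
    have hbadcard : bad.card < e * e := by
      have h1 : bad.card ≤ ((Finset.univ.filter (fun σ : K →ₐ[k] Ω => σ ≠ ι)).biUnion L).card :=
        Finset.card_le_card hsub
      have h2 : ((Finset.univ.filter (fun σ : K →ₐ[k] Ω => σ ≠ ι)).biUnion L).card
          ≤ (Finset.univ.filter (fun σ : K →ₐ[k] Ω => σ ≠ ι)).card * e := by
        refine le_trans (Finset.card_biUnion_le) ?_
        have := Finset.sum_le_card_nsmul (Finset.univ.filter (fun σ : K →ₐ[k] Ω => σ ≠ ι))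
          (fun σ => (L σ).card) e
          (fun σ hσ => hLcard σ (by simpa using (Finset.mem_filter.mp hσ).2))
        simpa [smul_eq_mul] using this
      have h3 : (Finset.univ.filter (fun σ : K →ₐ[k] Ω => σ ≠ ι)).card = e - 1 := by
        rw [Finset.filter_ne' Finset.univ ι, Finset.card_erase_of_mem (Finset.mem_univ _),
          Finset.card_univ, hcard]
      calc bad.card ≤ (e - 1) * e := by rw [← h3]; exact le_trans h1 h2
      _ < e * e := by
        have : 0 < e := by omega
        exact Nat.mul_lt_mul_of_lt_of_le (by omega) le_rfl this
    have hexists : ∃ p : Fin e × Fin e, p ∉ bad := by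
      by_contra hc
      push_neg at hc
      have : (Finset.univ : Finset (Fin e × Fin e)) ⊆ bad := fun p _ => hc p
      have := Finset.card_le_card this
      rw [Finset.card_univ, Fintype.card_prod, Fintype.card_fin] at this
      omega
    obtain ⟨p, hp⟩ := hexists
    refine ⟨p.1, p.2, p.1.isLt, p.2.isLt, ?_⟩
    by_contra hc
    exact hp (by simp only [hbad, Finset.mem_filter, Finset.mem_univ, true_and]; exact hc)

end Aux

/-- For number fields `k ⊆ K` with `[K:k] = e`: for all `α, β ∈ K` with `k(α,β) = K`
there are integers `0 ≤ m₁, m₂ < e` such that `ξ = m₁α + m₂β` satisfies `k(ξ) = K` and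
`H(1,ξ) ≤ 2e·H(1,α,β)`; consequently `δ(K/k) ≤ 2e·δ_g(K/k)` for all `g ∈ G(K/k)`. -/
theorem stmt12 (k K : Type*) [Field k] [Field K] [Algebra k K]
    [NumberField k] [NumberField K] [FiniteDimensional k K]
    (e : ℕ) (he : Module.finrank k K = e) :
    (∀ α β : K, IntermediateField.adjoin k {α, β} = ⊤ →
      ∃ m₁ m₂ : ℕ, m₁ < e ∧ m₂ < e ∧
        IntermediateField.adjoin k {((m₁ : K) * α + (m₂ : K) * β)} = ⊤ ∧
        heightTuple K ![1, (m₁ : K) * α + (m₂ : K) * β] ≤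
          2 * e * heightTuple K ![1, α, β]) ∧
    (∀ g ∈ GSet k K, deltaKk k K ≤ 2 * e * deltaG k K g) := by
  classical
  have he1 : 1 ≤ e := he ▸ Module.finrank_pos
  have part1 : ∀ α β : K, IntermediateField.adjoin k {α, β} = ⊤ →
      ∃ m₁ m₂ : ℕ, m₁ < e ∧ m₂ < e ∧
        IntermediateField.adjoin k {((m₁ : K) * α + (m₂ : K) * β)} = ⊤ ∧
        heightTuple K ![1, (m₁ : K) * α + (m₂ : K) * β] ≤
          2 * e * heightTuple K ![1, α, β] := by
    intro α β hab
    obtain ⟨m₁, m₂, h1, h2, h3⟩ := exists_good_pair k e he α β hab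
    exact ⟨m₁, m₂, h1, h2, h3, heightTuple_combination_le α β m₁ m₂ e h1.le h2.le he1⟩
  refine ⟨part1, ?_⟩
  intro g hg
  -- the defining set of `deltaG k K g` is nonempty
  have hS : ∃ α β : K, IntermediateField.adjoin k {α, β} = ⊤ ∧
      Module.finrank k (IntermediateField.adjoin k {α}) = g := by
    by_cases he2 : Module.finrank k K = 1
    · have hg1 : g = 1 := by
        simp only [GSet, he2, if_pos] at hg
        simpa using hg
      have h2 : (⊤ : IntermediateField k K) = ⊥ := by
        apply IntermediateField.finrank_eq_one_iff.mp
        rw [IntermediateField.finrank_top']; exact he2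
      have h0 : IntermediateField.adjoin k {(0 : K)} = ⊤ := eq_top_iff.mpr (h2 ▸ bot_le)
      refine ⟨0, 0, ?_, ?_⟩
      · rw [Set.pair_eq_singleton]; exact h0
      · rw [h0, IntermediateField.finrank_top', he2, hg1]
    · simp only [GSet, he2, if_neg, Set.mem_setOf_eq] at hg
      obtain ⟨K₀, hK₀ne, hK₀rank⟩ := hg
      haveI : FiniteDimensional k K₀ := FiniteDimensional.left k K₀ K
      haveI : CharZero K₀ :=
        charZero_of_injective_algebraMap (algebraMap k K₀).injective
      obtain ⟨α₀, hα₀⟩ := Field.exists_primitive_element k K₀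
      set α := (α₀ : K) with hα
      have hadjα : IntermediateField.adjoin k {α} = K₀ := by
        have hl := congrArg (IntermediateField.lift (F := K₀)) hα₀
        rwa [IntermediateField.lift_adjoin_simple, IntermediateField.lift_top] at hl
      haveI : FiniteDimensional K₀ K := FiniteDimensional.right k K₀ K
      obtain ⟨β, hβ⟩ := Field.exists_primitive_element K₀ K
      refine ⟨α, β, ?_, by rw [hadjα]; exact hK₀rank⟩
      have h1 : IntermediateField.adjoin (IntermediateField.adjoin k ({α} : Set K)) {β} = ⊤ := by
        rw [hadjα]; exact hβ
      have h2 := IntermediateField.adjoin_adjoin_left k ({α} : Set K) {β}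
      rw [h1, IntermediateField.restrictScalars_top, Set.singleton_union] at h2
      exact h2.symm
  obtain ⟨α', β', hab', hrank'⟩ := hS
  have hSne : {h : ℝ | ∃ α β : K, IntermediateField.adjoin k {α, β} = ⊤ ∧
      Module.finrank k (IntermediateField.adjoin k {α}) = g ∧
      h = heightTuple K ![1, α, β]}.Nonempty :=
    ⟨heightTuple K ![1, α', β'], α', β', hab', hrank', rfl⟩
  have hbdd : BddBelow {h : ℝ | ∃ α : K, IntermediateField.adjoin k {α} = ⊤ ∧
      h = heightTuple K ![1, α]} := by
    refine ⟨0, ?_⟩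
    rintro h ⟨α, -, rfl⟩
    exact heightTuple_nonneg _
  have h2e : (0:ℝ) < 2 * e := by
    have : (1:ℝ) ≤ (e:ℝ) := by exact_mod_cast he1
    linarith
  have hstep : ∀ h ∈ {h : ℝ | ∃ α β : K, IntermediateField.adjoin k {α, β} = ⊤ ∧
      Module.finrank k (IntermediateField.adjoin k {α}) = g ∧
      h = heightTuple K ![1, α, β]}, deltaKk k K ≤ 2 * e * h := by
    rintro h ⟨α, β, hab, -, rfl⟩
    obtain ⟨m₁, m₂, -, -, h3, h4⟩ := part1 α β hab
    refine le_trans (csInf_le hbdd ?_) h4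
    exact ⟨(m₁ : K) * α + (m₂ : K) * β, h3, rfl⟩
  have hdiv : deltaKk k K / (2 * e) ≤ deltaG k K g := by
    apply le_csInf hSne
    intro b hb
    rw [div_le_iff₀ h2e, mul_comm]
    exact hstep b hb
  rw [div_le_iff₀ h2e, mul_comm] at hdiv
  exact hdiv
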